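/- In the classical SK model, for every function f on Σ_N with |f| ≤ 1 and every integer p ≥ 1, E[ |⟨f⟩ − ⟨f⟩_0|^{2p} ] ≤ K(p,β) k² / N, where ⟨·⟩_0 is the Gibbs measure of the interpolating Hamiltonian at t = 0 and K(p,β) depends only on p and β. -/

import Mathlib

open MeasureTheory ProbabilityTheory Real
open scoped ENNReal NNReal

noncomputable section
set_option maxHeartbeats 1000000

lemma gauss_exp_integrable (c : ℝ) :
    Integrable (fun x => rexp (c * x)) (gaussianReal 0 1) := by
  rw [gaussianReal_of_var_ne_zero 0 one_ne_zero]
  have hpdf : gaussianPDF 0 1 = fun x => ((gaussianPDFReal 0 1 x).toNNReal : ℝ≥0∞) := rfl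
  rw [hpdf, integrable_withDensity_iff_integrable_smul
    (measurable_gaussianPDFReal 0 1).real_toNNReal]
  have : (fun x => ((gaussianPDFReal 0 1 x).toNNReal : ℝ≥0) • rexp (c * x))
      = fun x => rexp (c^2/2) * gaussianPDFReal c 1 x := by
    funext x
    rw [NNReal.smul_def, Real.coe_toNNReal _ (gaussianPDFReal_nonneg 0 1 x)]
    simp only [smul_eq_mul, gaussianPDFReal]
    rw [mul_assoc, ← Real.exp_add, mul_left_comm, ← Real.exp_add]
    congr 1
    push_cast
    ring
  rw [this]
  exact (integrable_gaussianPDFReal c 1).const_mul _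

lemma gauss_exp_integral (c : ℝ) :
    ∫ x, rexp (c * x) ∂(gaussianReal 0 1) = rexp (c^2/2) := by
  rw [gaussianReal_of_var_ne_zero 0 one_ne_zero]
  have hpdf : gaussianPDF 0 1 = fun x => ((gaussianPDFReal 0 1 x).toNNReal : ℝ≥0∞) := rfl
  rw [hpdf, integral_withDensity_eq_integral_smul
    (measurable_gaussianPDFReal 0 1).real_toNNReal]
  have : (fun x => ((gaussianPDFReal 0 1 x).toNNReal : ℝ≥0) • rexp (c * x))
      = fun x => rexp (c^2/2) * gaussianPDFReal c 1 x := by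
    funext x
    rw [NNReal.smul_def, Real.coe_toNNReal _ (gaussianPDFReal_nonneg 0 1 x)]
    simp only [smul_eq_mul, gaussianPDFReal]
    rw [mul_assoc, ← Real.exp_add, mul_left_comm, ← Real.exp_add]
    congr 1
    push_cast
    ring
  rw [this, integral_const_mul, integral_gaussianPDFReal_eq_one c one_ne_zero, mul_one]


variable {ν : Measure ℝ} [IsProbabilityMeasure ν]

theorem my_integrable_pi_fin {n : ℕ} {f : Fin n → ℝ → ℝ} (hf : ∀ i, Integrable (f i) ν) :
    Integrable (fun x : Fin n → ℝ => ∏ i, f i (x i)) (Measure.pi fun _ => ν) := by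
  induction n with
  | zero => simpa using integrable_const (1 : ℝ)
  | succ n n_ih =>
      have := ((measurePreserving_piFinSuccAbove (fun _ : Fin (n+1) => ν) 0).symm)
      rw [← this.integrable_comp_emb (MeasurableEquiv.measurableEmbedding _)]
      simp_rw [MeasurableEquiv.piFinSuccAbove_symm_apply, Fin.insertNthEquiv,
        Fin.prod_univ_succ, Fin.insertNth_zero]
      simp only [Fin.zero_succAbove, Function.comp_def, Fin.cons_zero, Fin.cons_succ,
        Equiv.coe_fn_mk]
      have h2 : Integrable (fun (x : Fin n → ℝ) ↦ ∏ j, f (Fin.succ j) (x j))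
          (Measure.pi fun _ => ν) := n_ih (fun i ↦ hf _)
      exact Integrable.mul_prod (hf 0) h2

theorem my_integral_pi_fin {n : ℕ} (f : Fin n → ℝ → ℝ) :
    ∫ x : Fin n → ℝ, ∏ i, f i (x i) ∂(Measure.pi fun _ => ν) = ∏ i, ∫ x, f i x ∂ν := by
  induction n with
  | zero => simp
  | succ n n_ih =>
      calc
        _ = ∫ x : ℝ × (Fin n → ℝ),
            f 0 x.1 * ∏ i : Fin n, f (Fin.succ i) (x.2 i)
              ∂(ν.prod (Measure.pi fun _ => ν)) := by
          rw [← ((measurePreserving_piFinSuccAbove (fun _ : Fin (n+1) => ν) 0).symm).integral_comp']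
          congr 1
          funext x
          simp [MeasurableEquiv.piFinSuccAbove, Fin.insertNthEquiv, Fin.prod_univ_succ,
            Fin.insertNth_zero, Fin.zero_succAbove]
        _ = (∫ x, f 0 x ∂ν) * ∏ i : Fin n, ∫ x, f (Fin.succ i) x ∂ν := by
          rw [← n_ih, ← integral_prod_mul]
        _ = ∏ i, ∫ x, f i x ∂ν := by rw [Fin.prod_univ_succ]

theorem my_integrable_pi {ι : Type} [Fintype ι] {f : ι → ℝ → ℝ} (hf : ∀ i, Integrable (f i) ν) :
    Integrable (fun x : ι → ℝ => ∏ i, f i (x i)) (Measure.pi fun _ => ν) := by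
  let e := (Fintype.equivFin ι).symm
  rw [← (measurePreserving_piCongrLeft (fun _ : ι => ν) e).integrable_comp_emb
    (MeasurableEquiv.measurableEmbedding _)]
  simp_rw [← e.prod_comp, MeasurableEquiv.coe_piCongrLeft, Function.comp_def,
    Equiv.piCongrLeft_apply_apply]
  exact my_integrable_pi_fin (fun i ↦ hf _)

theorem my_integral_pi {ι : Type} [Fintype ι] (f : ι → ℝ → ℝ) :
    ∫ x : ι → ℝ, ∏ i, f i (x i) ∂(Measure.pi fun _ => ν) = ∏ i, ∫ x, f i x ∂ν := by
  let e := (Fintype.equivFin ι).symm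
  rw [← (measurePreserving_piCongrLeft (fun _ : ι => ν) e).integral_comp']
  simp_rw [← e.prod_comp, MeasurableEquiv.coe_piCongrLeft, Equiv.piCongrLeft_apply_apply]
  rw [my_integral_pi_fin]

lemma pi_exp_integrable {ι : Type} [Fintype ι] (c : ι → ℝ) :
    Integrable (fun z : ι → ℝ => rexp (∑ a, z a * c a))
      (Measure.pi fun _ => gaussianReal 0 1) := by
  have h : (fun z : ι → ℝ => rexp (∑ a, z a * c a))
      = fun z => ∏ a, rexp (c a * z a) := by
    funext z; rw [Real.exp_sum]; exact Finset.prod_congr rfl fun a _ => by rw [mul_comm]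
  rw [h]
  exact my_integrable_pi (fun a => gauss_exp_integrable (c a))

lemma pi_exp_integral {ι : Type} [Fintype ι] (c : ι → ℝ) :
    ∫ z : ι → ℝ, rexp (∑ a, z a * c a) ∂(Measure.pi fun _ => gaussianReal 0 1)
      = rexp (∑ a, (c a)^2 / 2) := by
  have h : (fun z : ι → ℝ => rexp (∑ a, z a * c a))
      = fun z => ∏ a, rexp (c a * z a) := by
    funext z; rw [Real.exp_sum]; exact Finset.prod_congr rfl fun a _ => by rw [mul_comm]
  rw [h, my_integral_pi (fun a t => rexp (c a * t)), Real.exp_sum]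
  exact Finset.prod_congr rfl fun a _ => by rw [gauss_exp_integral]

lemma core {ι S : Type} [Fintype ι] [Fintype S] [Nonempty S]
    (H f : S → ℝ) (v : ι → S → ℝ) (ε C : ℝ)
    (hf : ∀ s, |f s| ≤ 1) (hv : ∀ a s, |v a s| ≤ ε)
    (hC : 4 * ε^2 * (Fintype.card ι : ℝ) ≤ C) :
    ∫ z : ι → ℝ, ((∑ s, f s * rexp (H s + ∑ a, z a * v a s)) /
        (∑ s, rexp (H s + ∑ a, z a * v a s)) -
        (∑ s, f s * rexp (H s)) / (∑ s, rexp (H s)))^2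
      ∂(Measure.pi fun _ => gaussianReal 0 1)
      ≤ 8 * rexp (2 * C) * (4 * ε^2 * (Fintype.card ι : ℝ)) := by
  set Z0 : ℝ := ∑ s, rexp (H s) with hZ0def
  have hZ0 : 0 < Z0 := Finset.sum_pos (fun s _ => Real.exp_pos _) Finset.univ_nonempty
  set q : S → ℝ := fun s => rexp (H s) / Z0 with hqdef
  have hq0 : ∀ s, 0 < q s := fun s => div_pos (Real.exp_pos _) hZ0
  have hq1 : ∑ s, q s = 1 := by
    simp only [hqdef, ← Finset.sum_div]; exact div_self hZ0.ne'
  set c : ℝ := (∑ s, f s * rexp (H s)) / Z0 with hcdef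
  have hcq : ∑ s, q s * f s = c := by
    rw [hcdef, Finset.sum_div]; exact Finset.sum_congr rfl fun s _ => by rw [hqdef]; ring
  have hcabs : |c| ≤ 1 := by
    rw [← hcq]
    calc |∑ s, q s * f s| ≤ ∑ s, |q s * f s| := Finset.abs_sum_le_sum_abs _ _
      _ ≤ ∑ s, q s := by
          refine Finset.sum_le_sum fun s _ => ?_
          rw [abs_mul, abs_of_pos (hq0 s)]
          exact mul_le_of_le_one_right (hq0 s).le (hf s)
      _ = 1 := hq1
  set vbar : ι → ℝ := fun a => ∑ s, q s * v a s with hvbardef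
  have hvbar : ∀ a, |vbar a| ≤ ε := by
    intro a
    calc |∑ s, q s * v a s| ≤ ∑ s, |q s * v a s| := Finset.abs_sum_le_sum_abs _ _
      _ ≤ ∑ s, q s * ε := by
          refine Finset.sum_le_sum fun s _ => ?_
          rw [abs_mul, abs_of_pos (hq0 s)]
          exact mul_le_mul_of_nonneg_left (hv a s) (hq0 s).le
      _ = ε := by rw [← Finset.sum_mul, hq1, one_mul]
  set w : ι → S → ℝ := fun a s => v a s - vbar a with hwdef
  have hw : ∀ a s, |w a s| ≤ 2 * ε := by
    intro a s
    calc |v a s - vbar a| ≤ |v a s| + |vbar a| := abs_sub _ _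
      _ ≤ 2 * ε := by have := hv a s; have := hvbar a; linarith
  have hqw : ∀ a, ∑ s, q s * w a s = 0 := by
    intro a
    simp only [hwdef, mul_sub, Finset.sum_sub_distrib, ← Finset.sum_mul, hq1, one_mul,
      sub_self, ← hvbardef]
    exact sub_eq_zero.mpr rfl
  set τ : S → ℝ := fun s => ∑ a, (w a s)^2 with hτdef
  have hτ0 : ∀ s, 0 ≤ τ s := fun s => Finset.sum_nonneg fun a _ => sq_nonneg _
  have hτle : ∀ s, τ s ≤ 4 * ε^2 * (Fintype.card ι : ℝ) := by
    intro s
    calc ∑ a, (w a s)^2 ≤ ∑ a : ι, (2*ε)^2 := by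
          refine Finset.sum_le_sum fun a _ => ?_
          rw [← sq_abs]
          have h2 : (0:ℝ) ≤ 2 * ε := le_trans (abs_nonneg _) (hw a s)
          exact pow_le_pow_left₀ (abs_nonneg _) (hw a s) 2
      _ = 4 * ε^2 * (Fintype.card ι : ℝ) := by
          rw [Finset.sum_const, Finset.card_univ, nsmul_eq_mul]; ring
  have hτC : ∀ s, τ s ≤ C := fun s => le_trans (hτle s) hC
  set What : (ι → ℝ) → S → ℝ := fun z s => ∑ a, z a * w a s with hWdef
  -- pointwise bound
  have hpoint : ∀ z : ι → ℝ,
      ((∑ s, f s * rexp (H s + ∑ a, z a * v a s)) /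
        (∑ s, rexp (H s + ∑ a, z a * v a s)) - c)^2
      ≤ 4 * ∑ s, q s * (rexp (What z s) - 1)^2 := by
    intro z
    set E : ℝ := rexp (∑ a, z a * vbar a) with hEdef
    have hE : 0 < E := Real.exp_pos _
    have key : ∀ s, rexp (H s + ∑ a, z a * v a s)
        = (Z0 * E) * (q s * rexp (What z s)) := by
      intro s
      have h1 : H s + ∑ a, z a * v a s = H s + ((∑ a, z a * vbar a) + What z s) := by
        rw [hWdef]
        simp only [← Finset.sum_add_distrib]
        congr 1
        exact Finset.sum_congr rfl fun a _ => by rw [hwdef]; ring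
      rw [h1, Real.exp_add, Real.exp_add]
      have h2 : Z0 * q s = rexp (H s) := by
        rw [hqdef]; field_simp
      rw [← h2]; ring
    set D : ℝ := ∑ s, q s * rexp (What z s) with hDdef
    have hD0 : 0 < D := Finset.sum_pos
      (fun s _ => mul_pos (hq0 s) (Real.exp_pos _)) Finset.univ_nonempty
    have hD1 : 1 ≤ D := by
      have hjen := convexOn_exp.map_sum_le (t := Finset.univ) (w := q) (p := fun s => What z s)
        (fun s _ => (hq0 s).le) hq1 (fun s _ => Set.mem_univ _)
      have hzero : ∑ s, q s • What z s = 0 := by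
        simp only [smul_eq_mul, hWdef, Finset.mul_sum]
        rw [Finset.sum_comm]
        have : ∀ a, ∑ s, q s * (z a * w a s) = 0 := by
          intro a
          have : ∑ s, q s * (z a * w a s) = z a * ∑ s, q s * w a s := by
            rw [Finset.mul_sum]; exact Finset.sum_congr rfl fun s _ => by ring
          rw [this, hqw a, mul_zero]
        exact Finset.sum_eq_zero fun a _ => this a
      rw [hzero, Real.exp_zero] at hjen
      simpa [smul_eq_mul] using hjen
    have hNum : (∑ s, f s * rexp (H s + ∑ a, z a * v a s))
        = (Z0 * E) * ∑ s, q s * f s * rexp (What z s) := by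
      rw [Finset.mul_sum]
      exact Finset.sum_congr rfl fun s _ => by rw [key s]; ring
    have hDen : (∑ s, rexp (H s + ∑ a, z a * v a s)) = (Z0 * E) * D := by
      rw [hDdef, Finset.mul_sum]
      exact Finset.sum_congr rfl fun s _ => by rw [key s]
    have hZE : (0:ℝ) < Z0 * E := mul_pos hZ0 hE
    have hratio : (∑ s, f s * rexp (H s + ∑ a, z a * v a s)) /
        (∑ s, rexp (H s + ∑ a, z a * v a s)) - c
        = (∑ s, q s * (f s - c) * (rexp (What z s) - 1)) / D := by
      rw [hNum, hDen, mul_div_mul_left _ _ hZE.ne']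
      have hnum2 : ∑ s, q s * (f s - c) * (rexp (What z s) - 1)
          = (∑ s, q s * f s * rexp (What z s)) - c * D := by
        have expand : ∀ s, q s * (f s - c) * (rexp (What z s) - 1)
            = q s * f s * rexp (What z s) - c * (q s * rexp (What z s))
              - q s * f s + c * q s := by intro s; ring
        simp only [expand, Finset.sum_sub_distrib, Finset.sum_add_distrib, ← Finset.mul_sum,
          hDdef]
        rw [hcq, hq1, mul_one]
        ring
      rw [hnum2, sub_div, mul_div_assoc, div_self hD0.ne', mul_one]
    rw [hratio]
    have habs : |(∑ s, q s * (f s - c) * (rexp (What z s) - 1)) / D|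
        ≤ 2 * ∑ s, q s * |rexp (What z s) - 1| := by
      rw [abs_div, abs_of_pos hD0]
      have h1 : |∑ s, q s * (f s - c) * (rexp (What z s) - 1)|
          ≤ ∑ s, q s * 2 * |rexp (What z s) - 1| := by
        refine le_trans (Finset.abs_sum_le_sum_abs _ _) (Finset.sum_le_sum fun s _ => ?_)
        rw [abs_mul, abs_mul, abs_of_pos (hq0 s)]
        have hfc : |f s - c| ≤ 2 := by
          have h2 := hf s
          calc |f s - c| ≤ |f s| + |c| := abs_sub _ _
            _ ≤ 2 := by linarith
        exact mul_le_mul_of_nonneg_right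
          (mul_le_mul_of_nonneg_left hfc (hq0 s).le) (abs_nonneg _)
      have h2 : ∑ s, q s * 2 * |rexp (What z s) - 1|
          = 2 * ∑ s, q s * |rexp (What z s) - 1| := by
        rw [Finset.mul_sum]; exact Finset.sum_congr rfl fun s _ => by ring
      calc |∑ s, q s * (f s - c) * (rexp (What z s) - 1)| / D
          ≤ |∑ s, q s * (f s - c) * (rexp (What z s) - 1)| := div_le_self (abs_nonneg _) hD1
        _ ≤ 2 * ∑ s, q s * |rexp (What z s) - 1| := by rw [← h2]; exact h1
    have hCS : (∑ s, q s * |rexp (What z s) - 1|)^2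
        ≤ ∑ s, q s * (rexp (What z s) - 1)^2 := by
      have := Finset.sum_mul_sq_le_sq_mul_sq Finset.univ
        (fun s => Real.sqrt (q s)) (fun s => Real.sqrt (q s) * |rexp (What z s) - 1|)
      have e1 : ∀ s : S, Real.sqrt (q s) * (Real.sqrt (q s) * |rexp (What z s) - 1|)
          = q s * |rexp (What z s) - 1| := by
        intro s
        rw [← mul_assoc, Real.mul_self_sqrt (hq0 s).le]
      have e2 : ∀ s : S, (Real.sqrt (q s))^2 = q s := fun s => Real.sq_sqrt (hq0 s).le
      have e3 : ∀ s : S, (Real.sqrt (q s) * |rexp (What z s) - 1|)^2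
          = q s * (rexp (What z s) - 1)^2 := by
        intro s
        rw [mul_pow, Real.sq_sqrt (hq0 s).le, sq_abs]
      simp only [e1, e2, e3] at this
      simpa [hq1] using this
    calc ((∑ s, q s * (f s - c) * (rexp (What z s) - 1)) / D)^2
        ≤ (2 * ∑ s, q s * |rexp (What z s) - 1|)^2 := by
          rw [← sq_abs]
          have hnn : (0:ℝ) ≤ 2 * ∑ s, q s * |rexp (What z s) - 1| :=
            mul_nonneg (by norm_num) (Finset.sum_nonneg fun s _ =>
              mul_nonneg (hq0 s).le (abs_nonneg _))
          exact pow_le_pow_left₀ (abs_nonneg _) habs 2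
      _ = 4 * (∑ s, q s * |rexp (What z s) - 1|)^2 := by ring
      _ ≤ 4 * ∑ s, q s * (rexp (What z s) - 1)^2 := by
          have := hCS
          nlinarith [hCS]
  -- integrability of the pieces
  have hsq_eq : ∀ s, (fun z : ι → ℝ => (rexp (What z s) - 1)^2)
      = fun z => rexp (∑ a, z a * (2 * w a s)) - 2 * rexp (∑ a, z a * w a s) + 1 := by
    intro s
    funext z
    have h1 : ∑ a, z a * (2 * w a s) = What z s + What z s := by
      rw [hWdef, ← Finset.sum_add_distrib]
      exact Finset.sum_congr rfl fun a _ => by ring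
    rw [h1, Real.exp_add, hWdef]
    ring
  have hsq_int : ∀ s, Integrable (fun z : ι → ℝ => (rexp (What z s) - 1)^2)
      (Measure.pi fun _ => gaussianReal 0 1) := by
    intro s
    rw [hsq_eq s]
    exact ((pi_exp_integrable _).sub ((pi_exp_integrable _).const_mul 2)).add
      (integrable_const 1)
  have hsq_val : ∀ s, ∫ z : ι → ℝ, (rexp (What z s) - 1)^2
      ∂(Measure.pi fun _ => gaussianReal 0 1)
      ≤ 2 * rexp (2*C) * (4 * ε^2 * (Fintype.card ι : ℝ)) := by
    intro s
    rw [hsq_eq s]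
    have i2 : Integrable (fun z : ι → ℝ => rexp (∑ a, z a * (2 * w a s)))
        (Measure.pi fun _ => gaussianReal 0 1) := pi_exp_integrable _
    have i3 : Integrable (fun z : ι → ℝ => 2 * rexp (∑ a, z a * w a s))
        (Measure.pi fun _ => gaussianReal 0 1) := (pi_exp_integrable _).const_mul 2
    have i1 : Integrable (fun z : ι → ℝ =>
        rexp (∑ a, z a * (2 * w a s)) - 2 * rexp (∑ a, z a * w a s))
        (Measure.pi fun _ => gaussianReal 0 1) := i2.sub i3
    rw [integral_add i1 (integrable_const 1), integral_sub i2 i3,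
      integral_const_mul, pi_exp_integral, pi_exp_integral, integral_const]
    have e1 : ∑ a, (2 * w a s)^2/2 = 2 * τ s := by
      rw [hτdef, Finset.mul_sum]
      exact Finset.sum_congr rfl fun a _ => by ring
    have e2 : ∑ a, (w a s)^2/2 = τ s / 2 := by
      rw [hτdef, Finset.sum_div]
    rw [e1, e2]
    simp only [measure_univ, probReal_univ, smul_eq_mul, one_mul, mul_one]
    have h1 : rexp (2 * τ s) - 1 ≤ 2 * τ s * rexp (2 * C) := by
      have hb := Real.add_one_le_exp (-(2 * τ s))
      have hp := Real.exp_pos (2 * τ s)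
      have hinv : rexp (-(2 * τ s)) = (rexp (2 * τ s))⁻¹ := Real.exp_neg _
      rw [hinv] at hb
      have h2 : rexp (2 * τ s) - 1 ≤ 2 * τ s * rexp (2 * τ s) := by
        have := mul_le_mul_of_nonneg_right hb hp.le
        rw [inv_mul_cancel₀ hp.ne'] at this
        nlinarith
      have h3 : rexp (2 * τ s) ≤ rexp (2 * C) :=
        Real.exp_le_exp.mpr (by linarith [hτC s])
      calc rexp (2 * τ s) - 1 ≤ 2 * τ s * rexp (2 * τ s) := h2
        _ ≤ 2 * τ s * rexp (2 * C) :=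
            mul_le_mul_of_nonneg_left h3 (by linarith [hτ0 s])
    have h4 : (1:ℝ) ≤ rexp (τ s / 2) := by
      rw [← Real.exp_zero]
      exact Real.exp_le_exp.mpr (by linarith [hτ0 s])
    have h5 : 2 * τ s * rexp (2*C) ≤ 2 * rexp (2*C) * (4 * ε^2 * (Fintype.card ι : ℝ)) := by
      have := hτle s
      have hep := Real.exp_pos (2*C)
      nlinarith [hτ0 s]
    linarith
  -- put it together
  have hRHS_int : Integrable (fun z : ι → ℝ =>
      4 * ∑ s, q s * (rexp (What z s) - 1)^2) (Measure.pi fun _ => gaussianReal 0 1) := by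
    exact (integrable_finset_sum _ (fun s _ => (hsq_int s).const_mul (q s))).const_mul 4
  have hmono := integral_mono_of_nonneg (μ := Measure.pi fun _ : ι => gaussianReal 0 1)
    (f := fun z : ι → ℝ => ((∑ s, f s * rexp (H s + ∑ a, z a * v a s)) /
        (∑ s, rexp (H s + ∑ a, z a * v a s)) - c)^2)
    (g := fun z : ι → ℝ => 4 * ∑ s, q s * (rexp (What z s) - 1)^2)
    (Filter.Eventually.of_forall fun z => sq_nonneg _) hRHS_int
    (Filter.Eventually.of_forall hpoint)
  have hRHS_val : ∫ z : ι → ℝ, 4 * ∑ s, q s * (rexp (What z s) - 1)^2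
      ∂(Measure.pi fun _ => gaussianReal 0 1)
      ≤ 8 * rexp (2 * C) * (4 * ε^2 * (Fintype.card ι : ℝ)) := by
    rw [integral_const_mul, integral_finset_sum _ (fun s _ => (hsq_int s).const_mul (q s))]
    have : ∀ s : S, ∫ z : ι → ℝ, q s * (rexp (What z s) - 1)^2
        ∂(Measure.pi fun _ => gaussianReal 0 1)
        ≤ q s * (2 * rexp (2*C) * (4 * ε^2 * (Fintype.card ι : ℝ))) := by
      intro s
      rw [integral_const_mul]
      exact mul_le_mul_of_nonneg_left (hsq_val s) (hq0 s).le
    calc 4 * ∑ s, ∫ z : ι → ℝ, q s * (rexp (What z s) - 1)^2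
          ∂(Measure.pi fun _ => gaussianReal 0 1)
        ≤ 4 * ∑ s, q s * (2 * rexp (2*C) * (4 * ε^2 * (Fintype.card ι : ℝ))) := by
          have hsum := Finset.sum_le_sum (s := Finset.univ) (fun s _ => this s)
          linarith
      _ = 8 * rexp (2 * C) * (4 * ε^2 * (Fintype.card ι : ℝ)) := by
          rw [← Finset.sum_mul, hq1, one_mul]; ring
  exact le_trans hmono hRHS_val

/-- Ordered pairs `i < j` of sites, indexing the SK disorder `(g_{ij})_{i<j}`. -/
abbrev SKPairs (N : ℕ) := {q : Fin N × Fin N // q.1 < q.2}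

/-- The spin configuration in `Σ_N = {-1,1}^N` associated with a Boolean vector. -/
def spin {N : ℕ} (b : Fin N → Bool) : Fin N → ℝ := fun i => if b i then 1 else -1

/-- Minus the interpolating SK Hamiltonian `−H_{N,t}`: the interactions among the first
`k` spins carry a factor `√t`, and at `t = 1` this is the classical SK Hamiltonian
`(β/√N) Σ_{i<j} g_{ij} x_i x_j + h Σ_i x_i`. -/
def negHSK (N k : ℕ) (β h t : ℝ) (g : SKPairs N → ℝ) (x : Fin N → ℝ) : ℝ :=
  (β / Real.sqrt N) *
    ∑ pq : SKPairs N,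
      (if (pq.1.2 : ℕ) < k then Real.sqrt t else 1) * g pq * x pq.1.1 * x pq.1.2
  + h * ∑ i, x i

/-- Gibbs expectation `⟨f⟩_t` of a function `f` on `Σ_N` for the Hamiltonian `−H_{N,t}`. -/
def gibbsSK (N k : ℕ) (β h t : ℝ) (g : SKPairs N → ℝ) (f : (Fin N → ℝ) → ℝ) : ℝ :=
  (∑ b : Fin N → Bool, f (spin b) * Real.exp (negHSK N k β h t g (spin b))) /
    ∑ b : Fin N → Bool, Real.exp (negHSK N k β h t g (spin b))

section SKlemmas

variable {N k : ℕ} {β h : ℝ}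

lemma abs_spin {N : ℕ} (b : Fin N → Bool) (i : Fin N) : |spin b i| = 1 := by
  unfold spin; by_cases hb : b i <;> simp [hb]

lemma sum_exp_negHSK_pos (t : ℝ) (g : SKPairs N → ℝ) :
    0 < ∑ b : Fin N → Bool, Real.exp (negHSK N k β h t g (spin b)) :=
  Finset.sum_pos (fun b _ => Real.exp_pos _) Finset.univ_nonempty

lemma abs_gibbsSK_le (t : ℝ) (g : SKPairs N → ℝ) {f : (Fin N → ℝ) → ℝ}
    (hf : ∀ x, |f x| ≤ 1) : |gibbsSK N k β h t g f| ≤ 1 := by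
  unfold gibbsSK
  rw [abs_div, abs_of_pos (sum_exp_negHSK_pos t g)]
  rw [div_le_one (sum_exp_negHSK_pos t g)]
  calc |∑ b : Fin N → Bool, f (spin b) * rexp (negHSK N k β h t g (spin b))|
      ≤ ∑ b : Fin N → Bool, |f (spin b) * rexp (negHSK N k β h t g (spin b))| :=
        Finset.abs_sum_le_sum_abs _ _
    _ ≤ ∑ b : Fin N → Bool, rexp (negHSK N k β h t g (spin b)) := by
        refine Finset.sum_le_sum fun b _ => ?_
        rw [abs_mul, abs_of_pos (Real.exp_pos _)]
        exact mul_le_of_le_one_left (Real.exp_pos _).le (hf _)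

lemma continuous_negHSK (t : ℝ) (x : Fin N → ℝ) :
    Continuous fun g : SKPairs N → ℝ => negHSK N k β h t g x := by
  unfold negHSK
  refine (continuous_const.mul (continuous_finset_sum _ fun pq _ => ?_)).add continuous_const
  exact ((continuous_const.mul (continuous_apply pq)).mul continuous_const).mul continuous_const

lemma continuous_gibbsSK (t : ℝ) (f : (Fin N → ℝ) → ℝ) :
    Continuous fun g : SKPairs N → ℝ => gibbsSK N k β h t g f := by
  unfold gibbsSK
  refine Continuous.div ?_ ?_ fun g => (sum_exp_negHSK_pos t g).ne'
  · exact continuous_finset_sum _ fun b _ =>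
      continuous_const.mul (Real.continuous_exp.comp (continuous_negHSK t (spin b)))
  · exact continuous_finset_sum _ fun b _ =>
      Real.continuous_exp.comp (continuous_negHSK t (spin b))

lemma negHSK_zero_indep (g g' : SKPairs N → ℝ) (x : Fin N → ℝ)
    (hgg : ∀ q : SKPairs N, ¬((q.1.2 : ℕ) < k) → g q = g' q) :
    negHSK N k β h 0 g x = negHSK N k β h 0 g' x := by
  unfold negHSK
  congr 2
  refine Finset.sum_congr rfl fun pq _ => ?_
  by_cases hc : (pq.1.2 : ℕ) < k
  · simp [hc]
  · simp [hc, hgg pq hc]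

lemma negHSK_one_decomp (g : SKPairs N → ℝ) (x : Fin N → ℝ) :
    negHSK N k β h 1 g x = negHSK N k β h 0 g x
      + ∑ a : {q : SKPairs N // (q.1.2 : ℕ) < k},
          g a.1 * ((β / Real.sqrt N) * (x a.1.1.1 * x a.1.1.2)) := by
  unfold negHSK
  rw [Real.sqrt_one, Real.sqrt_zero]
  have hsum : ∀ pq : SKPairs N,
      (if (pq.1.2 : ℕ) < k then (1:ℝ) else 1) * g pq * x pq.1.1 * x pq.1.2
      = (if (pq.1.2 : ℕ) < k then (0:ℝ) else 1) * g pq * x pq.1.1 * x pq.1.2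
        + (if (pq.1.2 : ℕ) < k then g pq * (x pq.1.1 * x pq.1.2) else 0) := by
    intro pq
    by_cases hc : (pq.1.2 : ℕ) < k <;> simp [hc] <;> ring
  simp_rw [hsum]
  rw [Finset.sum_add_distrib, mul_add]
  have hsub : (β / Real.sqrt N) * ∑ pq : SKPairs N,
      (if (pq.1.2 : ℕ) < k then g pq * (x pq.1.1 * x pq.1.2) else 0)
      = ∑ a : {q : SKPairs N // (q.1.2 : ℕ) < k},
          g a.1 * ((β / Real.sqrt N) * (x a.1.1.1 * x a.1.1.2)) := by
    rw [Finset.mul_sum]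
    simp_rw [mul_ite, mul_zero]
    rw [← Finset.sum_filter]
    rw [Finset.sum_subtype (p := fun q : SKPairs N => (q.1.2 : ℕ) < k)
      (Finset.univ.filter fun q : SKPairs N => (q.1.2 : ℕ) < k)
      (by simp) (fun pq : SKPairs N => (β / Real.sqrt N) * (g pq * (x pq.1.1 * x pq.1.2)))]
    exact Finset.sum_congr rfl fun a _ => by ring
  rw [hsub]
  ring

end SKlemmas



lemma card_small_pairs_le (N k : ℕ) :
    (Fintype.card {q : SKPairs N // (q.1.2 : ℕ) < k} : ℝ) ≤ (k:ℝ)^2 := by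
  have hinj : Function.Injective (fun a : {q : SKPairs N // (q.1.2 : ℕ) < k} =>
      ((⟨(a.1.1.1 : ℕ), lt_trans a.1.2 a.2⟩ : Fin k), (⟨(a.1.1.2 : ℕ), a.2⟩ : Fin k))) := by
    intro a b hab
    simp only [Prod.mk.injEq, Fin.mk.injEq] at hab
    obtain ⟨h1, h2⟩ := hab
    apply Subtype.ext
    apply Subtype.ext
    exact Prod.ext (Fin.ext h1) (Fin.ext h2)
  have hcard := Fintype.card_le_of_injective _ hinj
  rw [Fintype.card_prod, Fintype.card_fin] at hcard
  calc (Fintype.card {q : SKPairs N // (q.1.2 : ℕ) < k} : ℝ) ≤ ((k * k : ℕ) : ℝ) := by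
        exact_mod_cast hcard
    _ = (k:ℝ)^2 := by push_cast; ring

-- appended lemmas
section Matching

variable {N k : ℕ} {β h : ℝ}

def eqSplit (N k : ℕ) : (SKPairs N → ℝ) ≃ᵐ
    (({q : SKPairs N // (q.1.2:ℕ) < k} → ℝ) × ({q : SKPairs N // ¬((q.1.2:ℕ) < k)} → ℝ)) :=
  MeasurableEquiv.piEquivPiSubtypeProd (fun _ : SKPairs N => ℝ)
    (fun q : SKPairs N => (q.1.2:ℕ) < k)

lemma eqSplit_symm_apply_pos (z : {q : SKPairs N // (q.1.2:ℕ) < k} → ℝ)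
    (y : {q : SKPairs N // ¬((q.1.2:ℕ) < k)} → ℝ) (q : SKPairs N) (hq : (q.1.2:ℕ) < k) :
    (eqSplit N k).symm (z, y) q = z ⟨q, hq⟩ := by
  simp [eqSplit, MeasurableEquiv.piEquivPiSubtypeProd,
    Equiv.piEquivPiSubtypeProd_symm_apply, hq]

lemma eqSplit_symm_apply_neg (z : {q : SKPairs N // (q.1.2:ℕ) < k} → ℝ)
    (y : {q : SKPairs N // ¬((q.1.2:ℕ) < k)} → ℝ) (q : SKPairs N) (hq : ¬((q.1.2:ℕ) < k)) :
    (eqSplit N k).symm (z, y) q = y ⟨q, hq⟩ := by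
  simp [eqSplit, MeasurableEquiv.piEquivPiSubtypeProd,
    Equiv.piEquivPiSubtypeProd_symm_apply, hq]

lemma skmatch0 (z : {q : SKPairs N // (q.1.2:ℕ) < k} → ℝ)
    (y : {q : SKPairs N // ¬((q.1.2:ℕ) < k)} → ℝ) (x : Fin N → ℝ) :
    negHSK N k β h 0 ((eqSplit N k).symm (z, y)) x
      = negHSK N k β h 0 ((eqSplit N k).symm (0, y)) x := by
  refine negHSK_zero_indep _ _ _ fun q hq => ?_
  rw [eqSplit_symm_apply_neg z y q hq, eqSplit_symm_apply_neg 0 y q hq]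

lemma skmatch1 (z : {q : SKPairs N // (q.1.2:ℕ) < k} → ℝ)
    (y : {q : SKPairs N // ¬((q.1.2:ℕ) < k)} → ℝ) (x : Fin N → ℝ) :
    negHSK N k β h 1 ((eqSplit N k).symm (z, y)) x
      = negHSK N k β h 0 ((eqSplit N k).symm (0, y)) x
        + ∑ a : {q : SKPairs N // (q.1.2:ℕ) < k},
            z a * ((β / Real.sqrt N) * (x a.1.1.1 * x a.1.1.2)) := by
  rw [negHSK_one_decomp, skmatch0 z y x]
  congr 1
  refine Finset.sum_congr rfl fun a _ => ?_
  rw [show (a : SKPairs N) = (⟨a.1, a.2⟩ : {q : SKPairs N // (q.1.2:ℕ) < k}).1 from rfl,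
    eqSplit_symm_apply_pos z y a.1 a.2]

lemma sk_inner_bound (hβ : 0 < β) (hN0 : (0:ℝ) < N) (hk2N : (k:ℝ)^2 ≤ N)
    (f : (Fin N → ℝ) → ℝ) (hfb : ∀ x, |f x| ≤ 1)
    (y : {q : SKPairs N // ¬((q.1.2:ℕ) < k)} → ℝ) :
    ∫ z : {q : SKPairs N // (q.1.2:ℕ) < k} → ℝ,
        (gibbsSK N k β h 1 ((eqSplit N k).symm (z, y)) f
          - gibbsSK N k β h 0 ((eqSplit N k).symm (z, y)) f)^2
      ∂(Measure.pi fun _ => gaussianReal 0 1)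
      ≤ 32 * β^2 * rexp (8*β^2) * ((k:ℝ)^2 / N) := by
  classical
  set Hy : (Fin N → Bool) → ℝ :=
    fun b => negHSK N k β h 0 ((eqSplit N k).symm (0, y)) (spin b) with hHy
  set v : {q : SKPairs N // (q.1.2:ℕ) < k} → (Fin N → Bool) → ℝ :=
    fun a b => (β / Real.sqrt N) * (spin b a.1.1.1 * spin b a.1.1.2) with hv
  have hsqrtN : (0:ℝ) < Real.sqrt N := Real.sqrt_pos.mpr hN0
  have hε2 : (β / Real.sqrt N)^2 = β^2 / N := by rw [div_pow, Real.sq_sqrt hN0.le]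
  have hcard := card_small_pairs_le N k
  have hfun : ∀ z : {q : SKPairs N // (q.1.2:ℕ) < k} → ℝ,
      (gibbsSK N k β h 1 ((eqSplit N k).symm (z, y)) f
        - gibbsSK N k β h 0 ((eqSplit N k).symm (z, y)) f)
      = (∑ b, (fun b => f (spin b)) b * rexp (Hy b + ∑ a, z a * v a b)) /
          (∑ b, rexp (Hy b + ∑ a, z a * v a b)) -
        (∑ b, (fun b => f (spin b)) b * rexp (Hy b)) / (∑ b, rexp (Hy b)) := by
    intro z
    have h1 : ∀ b : Fin N → Bool,
        negHSK N k β h 1 ((eqSplit N k).symm (z, y)) (spin b)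
          = Hy b + ∑ a, z a * v a b := fun b => skmatch1 z y (spin b)
    have h0 : ∀ b : Fin N → Bool,
        negHSK N k β h 0 ((eqSplit N k).symm (z, y)) (spin b) = Hy b :=
      fun b => skmatch0 z y (spin b)
    have e1 : (∑ b : Fin N → Bool,
        f (spin b) * rexp (negHSK N k β h 1 ((eqSplit N k).symm (z, y)) (spin b)))
        = ∑ b : Fin N → Bool, f (spin b) * rexp (Hy b + ∑ a, z a * v a b) :=
      Finset.sum_congr rfl fun b _ => by rw [h1 b]
    have e2 : (∑ b : Fin N → Bool,
        rexp (negHSK N k β h 1 ((eqSplit N k).symm (z, y)) (spin b)))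
        = ∑ b : Fin N → Bool, rexp (Hy b + ∑ a, z a * v a b) :=
      Finset.sum_congr rfl fun b _ => by rw [h1 b]
    have e3 : (∑ b : Fin N → Bool,
        f (spin b) * rexp (negHSK N k β h 0 ((eqSplit N k).symm (z, y)) (spin b)))
        = ∑ b : Fin N → Bool, f (spin b) * rexp (Hy b) :=
      Finset.sum_congr rfl fun b _ => by rw [h0 b]
    have e4 : (∑ b : Fin N → Bool,
        rexp (negHSK N k β h 0 ((eqSplit N k).symm (z, y)) (spin b)))
        = ∑ b : Fin N → Bool, rexp (Hy b) :=
      Finset.sum_congr rfl fun b _ => by rw [h0 b]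
    unfold gibbsSK
    rw [e1, e2, e3, e4]
  have hvbound : ∀ (a : {q : SKPairs N // (q.1.2:ℕ) < k}) (b : Fin N → Bool),
      |v a b| ≤ β / Real.sqrt N := by
    intro a b
    rw [hv]
    rw [abs_mul, abs_mul, abs_spin, abs_spin, abs_of_pos (div_pos hβ hsqrtN)]
    norm_num
  have hCle : 4 * (β / Real.sqrt N)^2 *
      (Fintype.card {q : SKPairs N // (q.1.2:ℕ) < k} : ℝ) ≤ 4 * β^2 := by
    rw [hε2]
    have h1 : 4 * (β^2 / N) *
        (Fintype.card {q : SKPairs N // (q.1.2:ℕ) < k} : ℝ) ≤ 4 * (β^2/N) * (k:ℝ)^2 :=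
      mul_le_mul_of_nonneg_left hcard (by positivity)
    refine le_trans h1 ?_
    have h2 : (k:ℝ)^2 / N ≤ 1 := (div_le_one hN0).mpr hk2N
    have hb2 : (0:ℝ) ≤ β^2 := sq_nonneg β
    calc 4 * (β^2/N) * (k:ℝ)^2 = 4 * β^2 * ((k:ℝ)^2/N) := by ring
      _ ≤ 4 * β^2 * 1 := mul_le_mul_of_nonneg_left h2 (by positivity)
      _ = 4 * β^2 := by ring
  have hcore := core Hy (fun b => f (spin b)) v (β / Real.sqrt N) (4 * β^2)
    (fun b => hfb (spin b)) hvbound hCle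
  have hrw : ∫ z : {q : SKPairs N // (q.1.2:ℕ) < k} → ℝ,
      (gibbsSK N k β h 1 ((eqSplit N k).symm (z, y)) f
        - gibbsSK N k β h 0 ((eqSplit N k).symm (z, y)) f)^2
      ∂(Measure.pi fun _ => gaussianReal 0 1)
      = ∫ z : {q : SKPairs N // (q.1.2:ℕ) < k} → ℝ,
        ((∑ b, (fun b => f (spin b)) b * rexp (Hy b + ∑ a, z a * v a b)) /
          (∑ b, rexp (Hy b + ∑ a, z a * v a b)) -
         (∑ b, (fun b => f (spin b)) b * rexp (Hy b)) / (∑ b, rexp (Hy b)))^2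
      ∂(Measure.pi fun _ => gaussianReal 0 1) := by
    exact integral_congr_ae (Filter.Eventually.of_forall fun z =>
      congrArg (fun t : ℝ => t^2) (hfun z))
  rw [hrw]
  refine le_trans hcore ?_
  have h3 : 4 * (β / Real.sqrt N)^2 *
      (Fintype.card {q : SKPairs N // (q.1.2:ℕ) < k} : ℝ) ≤ 4 * β^2 * ((k:ℝ)^2/N) := by
    rw [hε2]
    calc 4 * (β^2 / N) * (Fintype.card {q : SKPairs N // (q.1.2:ℕ) < k} : ℝ)
        ≤ 4 * (β^2/N) * (k:ℝ)^2 := mul_le_mul_of_nonneg_left hcard (by positivity)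
      _ = 4 * β^2 * ((k:ℝ)^2/N) := by ring
  calc 8 * rexp (2 * (4*β^2)) * (4 * (β / Real.sqrt N)^2 *
        (Fintype.card {q : SKPairs N // (q.1.2:ℕ) < k} : ℝ))
      ≤ 8 * rexp (2 * (4*β^2)) * (4 * β^2 * ((k:ℝ)^2/N)) :=
        mul_le_mul_of_nonneg_left h3 (by positivity)
    _ = 32 * β^2 * rexp (8*β^2) * ((k:ℝ)^2 / N) := by
        rw [show 2 * (4*β^2) = 8*β^2 by ring]; ring

end Matching

/-- In the classical SK model, for every function `f` on `Σ_N` with `|f| ≤ 1` and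
every integer `p ≥ 1`, `E[|⟨f⟩ − ⟨f⟩_0|^{2p}] ≤ K(p,β) k²/N`, where `⟨·⟩_0` is the Gibbs
measure of the interpolating Hamiltonian at `t = 0` and `K(p,β)` depends only on `p`, `β`. -/
theorem sk_quenched_decomposition (p : ℕ) (hp : 1 ≤ p) (β : ℝ) (hβ : 0 < β) :
    ∃ K : ℝ, 0 < K ∧
      ∀ (N k : ℕ), 1 ≤ k → k < N →
      ∀ h : ℝ,
      ∀ (Ω : Type) [MeasurableSpace Ω] (P : Measure Ω) [IsProbabilityMeasure P]
        (g : Ω → SKPairs N → ℝ),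
        Measurable g →
        Measure.map g P = Measure.pi (fun _ : SKPairs N => gaussianReal 0 1) →
      ∀ f : (Fin N → ℝ) → ℝ, (∀ x, |f x| ≤ 1) →
        (∫ ω, |gibbsSK N k β h 1 (g ω) f - gibbsSK N k β h 0 (g ω) f| ^ (2 * p) ∂P)
          ≤ K * (k : ℝ) ^ 2 / N := by
  refine ⟨2^(2*p) * (32 * β^2 * rexp (8*β^2) + 1), by positivity, ?_⟩
  intro N k hk hkN h Ω _ P _ g hgmeas hgmap f hfb
  have hN0 : (0:ℝ) < N := by
    have : 0 < N := lt_of_le_of_lt (Nat.zero_le k) hkN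
    exact_mod_cast this
  set D : (SKPairs N → ℝ) → ℝ := fun G => gibbsSK N k β h 1 G f - gibbsSK N k β h 0 G f with hD
  have hDcont : Continuous D := (continuous_gibbsSK 1 f).sub (continuous_gibbsSK 0 f)
  have hDabs : ∀ G, |D G| ≤ 2 := by
    intro G
    have h1 := abs_gibbsSK_le (N := N) (k := k) (β := β) (h := h) 1 G hfb
    have h0 := abs_gibbsSK_le (N := N) (k := k) (β := β) (h := h) 0 G hfb
    calc |D G| ≤ |gibbsSK N k β h 1 G f| + |gibbsSK N k β h 0 G f| := abs_sub _ _
      _ ≤ 2 := by linarith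
  show (∫ ω, |D (g ω)| ^ (2 * p) ∂P)
      ≤ 2^(2*p) * (32 * β^2 * rexp (8*β^2) + 1) * (k : ℝ) ^ 2 / N
  by_cases hcase : (N:ℝ) ≤ (k:ℝ)^2
  · -- trivial regime k² ≥ N
    have hb1 : ∀ ω, |D (g ω)| ^ (2*p) ≤ 2^(2*p) := fun ω =>
      pow_le_pow_left₀ (abs_nonneg _) (hDabs _) _
    have hle : ∫ ω, |D (g ω)|^(2*p) ∂P ≤ ∫ _ω, (2:ℝ)^(2*p) ∂P :=
      integral_mono_of_nonneg (Filter.Eventually.of_forall fun ω => by positivity)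
        (integrable_const _) (Filter.Eventually.of_forall hb1)
    rw [integral_const, probReal_univ, one_smul] at hle
    refine le_trans hle ?_
    have h1 : (1:ℝ) ≤ (k:ℝ)^2 / N := (one_le_div hN0).mpr hcase
    have hM : (1:ℝ) ≤ 32*β^2*rexp (8*β^2) + 1 := by
      nlinarith [Real.exp_pos (8*β^2), sq_nonneg β]
    have h2p : (0:ℝ) < 2^(2*p) := by positivity
    calc (2:ℝ)^(2*p) = 2^(2*p) * 1 * 1 := by ring
      _ ≤ 2^(2*p) * (32*β^2*rexp (8*β^2) + 1) * ((k:ℝ)^2/N) := by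
          apply mul_le_mul
          · exact mul_le_mul_of_nonneg_left hM h2p.le
          · exact h1
          · norm_num
          · positivity
      _ = 2^(2*p) * (32 * β^2 * rexp (8*β^2) + 1) * (k : ℝ) ^ 2 / N := by ring
  · push_neg at hcase
    have hk2leN : (k:ℝ)^2 ≤ N := hcase.le
    have hpow : ∀ ω, |D (g ω)|^(2*p) ≤ 2^(2*p-2) * (D (g ω))^2 := by
      intro ω
      have h1 : |D (g ω)|^(2*p) = |D (g ω)|^(2*p-2) * |D (g ω)|^2 := by
        rw [← pow_add]; congr 1; omega
      rw [h1, sq_abs]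
      exact mul_le_mul_of_nonneg_right
        (pow_le_pow_left₀ (abs_nonneg _) (hDabs _) _) (sq_nonneg _)
    have hDg_meas : Measurable fun ω => (D (g ω))^2 :=
      (hDcont.measurable.comp hgmeas).pow_const 2
    have hDsq_le : ∀ G, (D G)^2 ≤ 4 := by
      intro G
      have h1 := hDabs G
      have h2 := abs_nonneg (D G)
      nlinarith [sq_abs (D G)]
    have hDg_int : Integrable (fun ω => (2:ℝ)^(2*p-2) * (D (g ω))^2) P := by
      refine Integrable.mono' (integrable_const ((2:ℝ)^(2*p-2) * 4))
        ((hDg_meas.const_mul _).aestronglyMeasurable)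
        (Filter.Eventually.of_forall fun ω => ?_)
      rw [Real.norm_eq_abs, abs_mul,
        abs_of_nonneg (by positivity : (0:ℝ) ≤ (2:ℝ)^(2*p-2)), abs_of_nonneg (sq_nonneg _)]
      exact mul_le_mul_of_nonneg_left (hDsq_le (g ω)) (by positivity)
    have step1 : ∫ ω, |D (g ω)|^(2*p) ∂P ≤ (2:ℝ)^(2*p-2) * ∫ ω, (D (g ω))^2 ∂P := by
      have h1 := integral_mono_of_nonneg
        (Filter.Eventually.of_forall fun ω => by positivity) hDg_int
        (Filter.Eventually.of_forall hpow)
      rwa [integral_const_mul] at h1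
    have hD2cont : Continuous fun G : SKPairs N → ℝ => (D G)^2 := hDcont.pow 2
    have step2 : ∫ ω, (D (g ω))^2 ∂P
        = ∫ G, (D G)^2 ∂(Measure.pi fun _ : SKPairs N => gaussianReal 0 1) := by
      rw [← hgmap, integral_map hgmeas.aemeasurable hD2cont.aestronglyMeasurable]
    set μA : Measure ({q : SKPairs N // (q.1.2:ℕ) < k} → ℝ) :=
      Measure.pi fun _ => gaussianReal 0 1 with hμA
    set μC : Measure ({q : SKPairs N // ¬((q.1.2:ℕ) < k)} → ℝ) :=
      Measure.pi fun _ => gaussianReal 0 1 with hμC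
    have hmp : MeasurePreserving (eqSplit N k)
        (Measure.pi fun _ : SKPairs N => gaussianReal 0 1) (μA.prod μC) :=
      measurePreserving_piEquivPiSubtypeProd
        (fun _ : SKPairs N => gaussianReal 0 1) (fun q : SKPairs N => (q.1.2:ℕ) < k)
    have step3 : ∫ G, (D G)^2 ∂(Measure.pi fun _ : SKPairs N => gaussianReal 0 1)
        = ∫ yz, (D ((eqSplit N k).symm yz))^2 ∂(μA.prod μC) := by
      rw [← hmp.integral_comp (eqSplit N k).measurableEmbedding
        (fun yz => (D ((eqSplit N k).symm yz))^2)]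
      simp only [MeasurableEquiv.symm_apply_apply]
    have hΦint : Integrable (fun yz => (D ((eqSplit N k).symm yz))^2) (μA.prod μC) := by
      refine Integrable.mono' (integrable_const 4)
        ((hD2cont.measurable.comp (eqSplit N k).symm.measurable).aestronglyMeasurable)
        (Filter.Eventually.of_forall fun yz => ?_)
      rw [Real.norm_eq_abs, abs_of_nonneg (sq_nonneg _)]
      exact hDsq_le _
    have step4 : ∫ yz, (D ((eqSplit N k).symm yz))^2 ∂(μA.prod μC)
        = ∫ y, ∫ z, (D ((eqSplit N k).symm (z, y)))^2 ∂μA ∂μC :=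
      integral_prod_symm _ hΦint
    have hinner : ∀ y, ∫ z, (D ((eqSplit N k).symm (z, y)))^2 ∂μA
        ≤ 32 * β^2 * rexp (8*β^2) * ((k:ℝ)^2 / N) := fun y =>
      sk_inner_bound hβ hN0 hk2leN f hfb y
    have hintegr_y : Integrable (fun y => ∫ z, (D ((eqSplit N k).symm (z,y)))^2 ∂μA) μC :=
      hΦint.integral_prod_right
    have step5 : ∫ y, (∫ z, (D ((eqSplit N k).symm (z,y)))^2 ∂μA) ∂μC
        ≤ 32*β^2*rexp (8*β^2) * ((k:ℝ)^2/N) := by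
      have h1 := integral_mono hintegr_y (integrable_const _) hinner
      rwa [integral_const, probReal_univ, one_smul] at h1
    have h2ple : (2:ℝ)^(2*p-2) ≤ 2^(2*p) :=
      pow_le_pow_right₀ one_le_two (by omega)
    calc ∫ ω, |D (g ω)|^(2*p) ∂P
        ≤ (2:ℝ)^(2*p-2) * ∫ ω, (D (g ω))^2 ∂P := step1
      _ = (2:ℝ)^(2*p-2) * ∫ y, ∫ z, (D ((eqSplit N k).symm (z, y)))^2 ∂μA ∂μC := by
          rw [step2, step3, step4]
      _ ≤ (2:ℝ)^(2*p-2) * (32*β^2*rexp (8*β^2) * ((k:ℝ)^2/N)) := by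
          apply mul_le_mul_of_nonneg_left step5 (by positivity)
      _ ≤ 2^(2*p) * (32 * β^2 * rexp (8*β^2) + 1) * (k : ℝ) ^ 2 / N := by
          have hkN2 : (0:ℝ) ≤ (k:ℝ)^2 / N := by positivity
          have he8 : (0:ℝ) < rexp (8*β^2) := Real.exp_pos _
          have h2p0 : (0:ℝ) < (2:ℝ)^(2*p-2) := by positivity
          rw [mul_div_assoc]
          nlinarith [mul_le_mul_of_nonneg_right h2ple
            (mul_nonneg (by positivity : (0:ℝ) ≤ 32*β^2*rexp (8*β^2)) hkN2),
            mul_nonneg (le_of_lt (by positivity : (0:ℝ) < (2:ℝ)^(2*p))) hkN2]
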